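/- For all f, f' ∈ K[x₁,…,x_{2k}] (polynomials independent of x₀) and all g, g' ∈ R, the following bracket relations hold among the derivations of R': [K_f, K_{f'}] = K_{{f,f'}}, where {f,f'} = Σ_{i=1}^{k}(∂_i f·∂_{k+i}f' + ∂_{k+i}f·∂_i f'); [K_f, A_g] = A_{K_f(g)}; [K_f, B_g] = B_{K_f(g)}; [A_g, A_{g'}] = B_{∂₀(g·g')}; [A_g, B_{g'}] = A_{g·g'}; and [B_g, B_{g'}] = 0. -/

import Mathlib

open MvPolynomial

/-- Index type for the variables `x₀, x₁, …, x_{2k}`: `none` is `x₀`, `Sum.inl i` is `x_i`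
(for `1 ≤ i ≤ k`) and `Sum.inr i` is `x_{k+i}`. -/
abbrev CIdx (k : ℕ) := Option (Fin k ⊕ Fin k)

/-- The polynomial ring `R = K[x₀, x₁, …, x_{2k}]`. -/
abbrev CP (K : Type*) [Field K] (k : ℕ) := MvPolynomial (CIdx k) K

/-- The square-zero extension `R' = R[θ]/(θ²)`. -/
abbrev CP' (K : Type*) [Field K] (k : ℕ) := TrivSqZeroExt (CP K k) (CP K k)

noncomputable section

variable (K : Type*) [Field K] (k : ℕ)

/-- The odd-type generator `θ` of `R' = R[θ]/(θ²)`. -/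
def theta : CP' K k := TrivSqZeroExt.inr 1

/-- The partial derivative `∂_j` extended componentwise to `R' = R ⊕ Rθ`. -/
def pd (j : CIdx k) : CP' K k → CP' K k := fun h =>
  TrivSqZeroExt.inl (pderiv j h.fst) + TrivSqZeroExt.inr (pderiv j h.snd)

/-- The derivation `∂_θ` of `R'`: `∂_θ(a + bθ) = b`. -/
def pdTheta : CP' K k → CP' K k := fun h => TrivSqZeroExt.inl h.snd

/-- The half Euler operator `E'(f) = Σ_{i=1}^{k} x_i ∂_i f` on `R`. -/
def eulerHalf (f : CP K k) : CP K k :=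
  ∑ i : Fin k, X (some (Sum.inl i)) * pderiv (some (Sum.inl i)) f

/-- The contact vector field `K_f` on `R'`, for `f ∈ K[x₁,…,x_{2k}]`: `K_f(θ) = 0` and
`K_f(h) = (f + E'f)∂₀h + Σ (∂_{k+i}f ∂_i h + ∂_i f ∂_{k+i} h)`. -/
def KF (f : CP K k) : CP' K k → CP' K k := fun h =>
  TrivSqZeroExt.inl (f + eulerHalf K k f) * pd K k (none : CIdx k) h
    + ∑ i : Fin k,
        (TrivSqZeroExt.inl (pderiv (some (Sum.inr i)) f) * pd K k (some (Sum.inl i)) h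
          + TrivSqZeroExt.inl (pderiv (some (Sum.inl i)) f) * pd K k (some (Sum.inr i)) h)

/-- The contact vector field `K_f` acting on `R` itself. -/
def KFR (f : CP K k) : CP K k → CP K k := fun h =>
  (f + eulerHalf K k f) * pderiv (none : CIdx k) h
    + ∑ i : Fin k,
        (pderiv (some (Sum.inr i)) f * pderiv (some (Sum.inl i)) h
          + pderiv (some (Sum.inl i)) f * pderiv (some (Sum.inr i)) h)

/-- The extra contact field `A_g = g·(θ∂₀ + ∂_θ)`, for `g ∈ R`. -/
def AF (g : CP K k) : CP' K k → CP' K k := fun h =>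
  TrivSqZeroExt.inl g * (theta K k * pd K k (none : CIdx k) h + pdTheta K k h)

/-- The extra contact field `B_g = g·θ·∂_θ`, for `g ∈ R`. -/
def BF (g : CP K k) : CP' K k → CP' K k := fun h =>
  TrivSqZeroExt.inl g * theta K k * pdTheta K k h

/-- The Poisson-type bracket `{f,f'} = Σ (∂_i f ∂_{k+i} f' + ∂_{k+i} f ∂_i f')`. -/
def pbr (f f' : CP K k) : CP K k :=
  ∑ i : Fin k,
    (pderiv (some (Sum.inl i)) f * pderiv (some (Sum.inr i)) f'
      + pderiv (some (Sum.inr i)) f * pderiv (some (Sum.inl i)) f')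

end

namespace ContactAux

open MvPolynomial TrivSqZeroExt

theorem pderiv_comm' {K : Type*} [CommSemiring K] {σ : Type*} (i j : σ) (p : MvPolynomial σ K) :
    pderiv i (pderiv j p) = pderiv j (pderiv i p) := by
  by_cases hij : i = j
  · subst hij; rfl
  · induction p using MvPolynomial.induction_on' with
    | monomial s a =>
      classical
      simp only [pderiv_monomial]
      rw [tsub_tsub, tsub_tsub, add_comm, Finsupp.tsub_apply, Finsupp.tsub_apply,
        Finsupp.single_eq_of_ne' hij, Finsupp.single_eq_of_ne' (Ne.symm hij)]
      simp only [Nat.sub_zero]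
      ring_nf
    | add p q hp hq => simp [hp, hq]

variable {K : Type*} [Field K] {k : ℕ}

theorem dsum_apply {ι : Type*} [DecidableEq ι] (s : Finset ι) (D : ι → Derivation K (CP K k) (CP K k))
    (a : CP K k) : (∑ i ∈ s, D i) a = ∑ i ∈ s, D i a := by
  induction s using Finset.induction_on with
  | empty => simp
  | insert _ _ h ih => rw [Finset.sum_insert h, Finset.sum_insert h, Derivation.add_apply, ih]

/-- `K_f` as a bona fide derivation of `R`. -/
noncomputable def KFD (f : CP K k) : Derivation K (CP K k) (CP K k) :=
  (f + eulerHalf K k f) • pderiv (none : CIdx k) +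
    ∑ i : Fin k, (pderiv (some (Sum.inr i)) f • pderiv (some (Sum.inl i))
      + pderiv (some (Sum.inl i)) f • pderiv (some (Sum.inr i)))

theorem KFD_apply (f a : CP K k) : KFD f a = KFR K k f a := by
  rw [KFD, KFR, Derivation.add_apply, Derivation.smul_apply, dsum_apply]
  simp only [Derivation.add_apply, Derivation.smul_apply, smul_eq_mul]

theorem KFD_X_none (f : CP K k) : KFD f (X none) = f + eulerHalf K k f := by
  rw [KFD_apply, KFR]
  simp

theorem KFD_X_inl (f : CP K k) (i : Fin k) :
    KFD f (X (some (Sum.inl i))) = pderiv (some (Sum.inr i)) f := by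
  classical
  rw [KFD_apply, KFR]
  rw [Finset.sum_eq_single i (fun j _ hji => by simp [Option.some.injEq, hji, Ne.symm hji])
    (by simp)]
  simp

theorem KFD_X_inr (f : CP K k) (i : Fin k) :
    KFD f (X (some (Sum.inr i))) = pderiv (some (Sum.inl i)) f := by
  classical
  rw [KFD_apply, KFR]
  rw [Finset.sum_eq_single i (fun j _ hji => by simp [Option.some.injEq, hji, Ne.symm hji])
    (by simp)]
  simp

end ContactAux

namespace ContactAux

open MvPolynomial TrivSqZeroExt

variable {K : Type*} [Field K] {k : ℕ}

theorem dmap_sum (D : Derivation K (CP K k) (CP K k)) {ι : Type*} (s : Finset ι)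
    (F : ι → CP K k) : D (∑ i ∈ s, F i) = ∑ i ∈ s, D (F i) :=
  map_sum D.toLinearMap F s

theorem pd0_of_supported {f : CP K k} (hf : f ∈ supported K {j : CIdx k | j ≠ none}) :
    pderiv (none : CIdx k) f = 0 :=
  pderiv_eq_zero_of_notMem_vars fun hmem => by
    have := (mem_supported.mp hf) hmem; simp at this

theorem pd0_euler {f : CP K k} (hf : pderiv (none : CIdx k) f = 0) :
    pderiv (none : CIdx k) (eulerHalf K k f) = 0 := by
  rw [eulerHalf, map_sum]
  refine Finset.sum_eq_zero fun i _ => ?_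
  rw [pderiv_mul, pderiv_comm' (none : CIdx k) _ f, hf]
  simp

theorem cross {f f' : CP K k} (h0 : pderiv (none : CIdx k) f = 0)
    (h0' : pderiv (none : CIdx k) f' = 0) (t : CIdx k) :
    KFD f (pderiv t f') + KFD f' (pderiv t f) = pderiv t (pbr K k f f') := by
  rw [KFD_apply, KFD_apply, KFR, KFR, pbr, map_sum,
    pderiv_comm' (none : CIdx k) t f', h0', pderiv_comm' (none : CIdx k) t f, h0]
  simp only [map_zero, mul_zero, zero_add]
  rw [← Finset.sum_add_distrib]
  refine Finset.sum_congr rfl fun i _ => ?_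
  rw [map_add, pderiv_mul, pderiv_mul,
    pderiv_comm' (some (Sum.inl i)) t f', pderiv_comm' (some (Sum.inr i)) t f',
    pderiv_comm' (some (Sum.inl i)) t f, pderiv_comm' (some (Sum.inr i)) t f]
  ring

end ContactAux

namespace ContactAux

open MvPolynomial TrivSqZeroExt

variable {K : Type*} [Field K] {k : ℕ}

theorem KFD_bracket [CharP K 2] {f f' : CP K k}
    (hf : f ∈ supported K {j : CIdx k | j ≠ none})
    (hf' : f' ∈ supported K {j : CIdx k | j ≠ none}) :
    ⁅KFD f, KFD f'⁆ = KFD (pbr K k f f') := by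
  have h0 : pderiv (none : CIdx k) f = 0 := pd0_of_supported hf
  have h0' : pderiv (none : CIdx k) f' = 0 := pd0_of_supported hf'
  apply derivation_ext
  intro j
  rw [Derivation.commutator_apply, CharTwo.sub_eq_add]
  match j with
  | some (Sum.inl i) =>
    rw [KFD_X_inl, KFD_X_inl, KFD_X_inl]
    exact cross h0 h0' (some (Sum.inr i))
  | some (Sum.inr i) =>
    rw [KFD_X_inr, KFD_X_inr, KFD_X_inr]
    exact cross h0 h0' (some (Sum.inl i))
  | none =>
    rw [KFD_X_none, KFD_X_none, KFD_X_none, map_add, map_add]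
    have hKff' : KFD f f' + KFD f' f = 0 := by
      rw [KFD_apply, KFD_apply, KFR, KFR, h0, h0', mul_zero, mul_zero, zero_add, zero_add,
        ← Finset.sum_add_distrib]
      refine Finset.sum_eq_zero fun i _ => ?_
      have : pderiv (some (Sum.inr i)) f * pderiv (some (Sum.inl i)) f'
          + pderiv (some (Sum.inl i)) f * pderiv (some (Sum.inr i)) f'
          + (pderiv (some (Sum.inr i)) f' * pderiv (some (Sum.inl i)) f
          + pderiv (some (Sum.inl i)) f' * pderiv (some (Sum.inr i)) f)
          = 2 * (pderiv (some (Sum.inr i)) f * pderiv (some (Sum.inl i)) f'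
              + pderiv (some (Sum.inl i)) f * pderiv (some (Sum.inr i)) f') := by ring
      rw [this, CharTwo.two_eq_zero, zero_mul]
    have hlm : ∀ (u v : CP K k) (j : Fin k),
        KFD u (X (some (Sum.inl j)) * pderiv (some (Sum.inl j)) v)
          = X (some (Sum.inl j)) * KFD u (pderiv (some (Sum.inl j)) v)
            + pderiv (some (Sum.inl j)) v * KFD u (X (some (Sum.inl j))) := fun u v j => by
      rw [Derivation.leibniz, smul_eq_mul, smul_eq_mul]
    rw [eulerHalf, eulerHalf, dmap_sum, dmap_sum,
      Finset.sum_congr rfl (fun j _ => hlm f f' j), Finset.sum_congr rfl (fun j _ => hlm f' f j),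
      Finset.sum_add_distrib, Finset.sum_add_distrib]
    have key : (∑ j : Fin k, X (some (Sum.inl j)) * KFD f (pderiv (some (Sum.inl j)) f'))
        + ∑ j : Fin k, X (some (Sum.inl j)) * KFD f' (pderiv (some (Sum.inl j)) f)
        = ∑ j : Fin k, X (some (Sum.inl j)) * pderiv (some (Sum.inl j)) (pbr K k f f') := by
      rw [← Finset.sum_add_distrib]
      refine Finset.sum_congr rfl fun j _ => ?_
      rw [← mul_add, cross h0 h0' (some (Sum.inl j))]
    have hc : (∑ j : Fin k, pderiv (some (Sum.inl j)) f' * KFD f (X (some (Sum.inl j))))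
        + ∑ j : Fin k, pderiv (some (Sum.inl j)) f * KFD f' (X (some (Sum.inl j)))
        = pbr K k f f' := by
      rw [pbr, ← Finset.sum_add_distrib]
      refine Finset.sum_congr rfl fun j _ => ?_
      rw [KFD_X_inl, KFD_X_inl]
      ring
    rw [eulerHalf]
    linear_combination hKff' + key + hc

end ContactAux

namespace ContactAux

open MvPolynomial TrivSqZeroExt

variable {K : Type*} [Field K] {k : ℕ}

theorem KFD_pd0_comm {f : CP K k} (h0 : pderiv (none : CIdx k) f = 0) (a : CP K k) :
    KFD f (pderiv (none : CIdx k) a) = pderiv (none : CIdx k) (KFD f a) := by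
  have hb : (⁅KFD f, (pderiv (none : CIdx k) :
      Derivation K (CP K k) (CP K k))⁆) = 0 := by
    apply derivation_ext
    intro j
    rw [Derivation.commutator_apply, Derivation.zero_apply, sub_eq_zero]
    match j with
    | none =>
      rw [pderiv_X_self, Derivation.map_one_eq_zero, KFD_X_none, map_add, h0,
        pd0_euler h0, add_zero]
    | some (Sum.inl i) =>
      rw [pderiv_X_of_ne (by simp), map_zero, KFD_X_inl,
        pderiv_comm' (none : CIdx k) _ f, h0, map_zero]
    | some (Sum.inr i) =>
      rw [pderiv_X_of_ne (by simp), map_zero, KFD_X_inr,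
        pderiv_comm' (none : CIdx k) _ f, h0, map_zero]
  have := Derivation.congr_fun hb a
  rw [Derivation.commutator_apply, Derivation.zero_apply, sub_eq_zero] at this
  exact this

theorem L1 [CharP K 2] {f f' : CP K k}
    (hf : f ∈ supported K {j : CIdx k | j ≠ none})
    (hf' : f' ∈ supported K {j : CIdx k | j ≠ none}) (a : CP K k) :
    KFR K k f (KFR K k f' a) - KFR K k f' (KFR K k f a) = KFR K k (pbr K k f f') a := by
  simp only [← KFD_apply]
  rw [← Derivation.commutator_apply, KFD_bracket hf hf']

theorem L3 (f g b : CP K k) :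
    KFR K k f (g * b) - g * KFR K k f b = KFR K k f g * b := by
  simp only [← KFD_apply]
  rw [Derivation.leibniz, smul_eq_mul, smul_eq_mul]
  ring

theorem L2 {f : CP K k} (h0 : pderiv (none : CIdx k) f = 0) (g a : CP K k) :
    KFR K k f (g * pderiv (none : CIdx k) a) - g * pderiv (none : CIdx k) (KFR K k f a)
      = KFR K k f g * pderiv (none : CIdx k) a := by
  simp only [← KFD_apply]
  rw [Derivation.leibniz, smul_eq_mul, smul_eq_mul, KFD_pd0_comm h0]
  ring

theorem KFR_zero (f : CP K k) : KFR K k f 0 = 0 := by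
  rw [← KFD_apply, map_zero]

end ContactAux

namespace ContactAux

open MvPolynomial TrivSqZeroExt

variable {K : Type*} [Field K] {k : ℕ}

theorem KF_fst (f : CP K k) (h : CP' K k) : (KF K k f h).fst = KFR K k f h.fst := by
  rw [KF, KFR]
  simp [pd, fst_sum, fst_mul, fst_add, mul_add, Finset.sum_add_distrib]

theorem KF_snd (f : CP K k) (h : CP' K k) : (KF K k f h).snd = KFR K k f h.snd := by
  rw [KF, KFR]
  simp [pd, snd_sum, snd_mul, snd_add, smul_eq_mul, mul_add, add_mul, Finset.sum_add_distrib,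
    mul_comm]

theorem AF_fst (g : CP K k) (h : CP' K k) : (AF K k g h).fst = g * h.snd := by
  rw [AF, theta, pd, pdTheta]
  simp

theorem AF_snd (g : CP K k) (h : CP' K k) :
    (AF K k g h).snd = g * pderiv (none : CIdx k) h.fst := by
  rw [AF, theta, pd, pdTheta]
  simp [snd_mul, smul_eq_mul, op_smul_eq_smul]

theorem BF_fst (g : CP K k) (h : CP' K k) : (BF K k g h).fst = 0 := by
  rw [BF, theta, pdTheta]
  simp

theorem BF_snd (g : CP K k) (h : CP' K k) : (BF K k g h).snd = g * h.snd := by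
  rw [BF, theta, pdTheta]
  simp [snd_mul, smul_eq_mul, op_smul_eq_smul, mul_comm]

end ContactAux

/-- For `p = 2`, the bracket relations among the contact fields `K_f` (for `f` independent
of `x₀`, i.e. `f ∈ K[x₁,…,x_{2k}]`) and the extra fields `A_g`, `B_g` on `R' = R[θ]/(θ²)`:
`[K_f, K_{f'}] = K_{{f,f'}}`, `[K_f, A_g] = A_{K_f(g)}`, `[K_f, B_g] = B_{K_f(g)}`,
`[A_g, A_{g'}] = B_{∂₀(gg')}`, `[A_g, B_{g'}] = A_{gg'}` and `[B_g, B_{g'}] = 0`,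
where the brackets are commutators of operators on `R'`. -/
theorem extra_contact_relations {K : Type*} [Field K] [CharP K 2] {k : ℕ} (hk : 1 ≤ k)
    (f f' : CP K k)
    (hf : f ∈ MvPolynomial.supported K {j : CIdx k | j ≠ none})
    (hf' : f' ∈ MvPolynomial.supported K {j : CIdx k | j ≠ none})
    (g g' : CP K k) :
    (∀ h, KF K k f (KF K k f' h) - KF K k f' (KF K k f h) = KF K k (pbr K k f f') h) ∧
    (∀ h, KF K k f (AF K k g h) - AF K k g (KF K k f h) = AF K k (KFR K k f g) h) ∧
    (∀ h, KF K k f (BF K k g h) - BF K k g (KF K k f h) = BF K k (KFR K k f g) h) ∧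
    (∀ h, AF K k g (AF K k g' h) - AF K k g' (AF K k g h)
        = BF K k (pderiv (none : CIdx k) (g * g')) h) ∧
    (∀ h, AF K k g (BF K k g' h) - BF K k g' (AF K k g h) = AF K k (g * g') h) ∧
    (∀ h, BF K k g (BF K k g' h) - BF K k g' (BF K k g h) = 0) := by
  have h0 : pderiv (none : CIdx k) f = 0 := ContactAux.pd0_of_supported hf
  refine ⟨fun h => ?_, fun h => ?_, fun h => ?_, fun h => ?_, fun h => ?_, fun h => ?_⟩
  · apply TrivSqZeroExt.ext
    · simp only [TrivSqZeroExt.fst_sub, ContactAux.KF_fst]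
      exact ContactAux.L1 hf hf' h.fst
    · simp only [TrivSqZeroExt.snd_sub, ContactAux.KF_snd]
      exact ContactAux.L1 hf hf' h.snd
  · apply TrivSqZeroExt.ext
    · simp only [TrivSqZeroExt.fst_sub, ContactAux.KF_fst, ContactAux.AF_fst, ContactAux.KF_snd]
      exact ContactAux.L3 f g h.snd
    · simp only [TrivSqZeroExt.snd_sub, ContactAux.KF_snd, ContactAux.AF_snd, ContactAux.KF_fst]
      exact ContactAux.L2 h0 g h.fst
  · apply TrivSqZeroExt.ext
    · simp only [TrivSqZeroExt.fst_sub, ContactAux.KF_fst, ContactAux.BF_fst,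
        ContactAux.KFR_zero, sub_zero]
    · simp only [TrivSqZeroExt.snd_sub, ContactAux.KF_snd, ContactAux.BF_snd]
      exact ContactAux.L3 f g h.snd
  · apply TrivSqZeroExt.ext
    · simp only [TrivSqZeroExt.fst_sub, ContactAux.AF_fst, ContactAux.AF_snd, ContactAux.BF_fst]
      ring
    · simp only [TrivSqZeroExt.snd_sub, ContactAux.AF_snd, ContactAux.AF_fst, ContactAux.BF_snd]
      rw [CharTwo.sub_eq_add, pderiv_mul, pderiv_mul, pderiv_mul]
      have h2 : (2 : CP K k) = 0 := CharTwo.two_eq_zero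
      linear_combination g * g' * pderiv (none : CIdx k) (TrivSqZeroExt.snd h) * h2
  · apply TrivSqZeroExt.ext
    · simp only [TrivSqZeroExt.fst_sub, ContactAux.AF_fst, ContactAux.BF_snd, ContactAux.BF_fst,
        sub_zero]
      ring
    · simp only [TrivSqZeroExt.snd_sub, ContactAux.AF_snd, ContactAux.BF_fst, ContactAux.BF_snd,
        map_zero, mul_zero]
      rw [CharTwo.sub_eq_add, zero_add]
      ring
  · apply TrivSqZeroExt.ext
    · simp only [TrivSqZeroExt.fst_sub, ContactAux.BF_fst, TrivSqZeroExt.fst_zero, sub_self]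
    · simp only [TrivSqZeroExt.snd_sub, ContactAux.BF_snd, TrivSqZeroExt.snd_zero]
      ring
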